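/- arXiv:1909.11325 — 4 statements merged into one kernel-verified Lean document; each statement's English description precedes it below -/
import Mathlib

section
/- For any graphs G and H, the independence number of the lexicographic product satisfies α(G∘H) = α(G)·α(H). -/
open SimpleGraph

/-- The lexicographic product of simple graphs. -/
def SimpleGraph.lexProd {α β : Type*} (G : SimpleGraph α) (H : SimpleGraph β) :
    SimpleGraph (α × β) where
  Adj x y := G.Adj x.1 y.1 ∨ (x.1 = y.1 ∧ H.Adj x.2 y.2)
  symm := ⟨by
    rintro ⟨g1, h1⟩ ⟨g2, h2⟩ (h | ⟨rfl, h⟩)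
    · exact Or.inl h.symm
    · exact Or.inr ⟨rfl, h.symm⟩⟩
  loopless := ⟨by
    rintro ⟨g, h⟩ (h' | ⟨-, h'⟩)
    · exact G.irrefl h'
    · exact H.irrefl h'⟩

/-- A set of vertices is independent if its vertices are pairwise non-adjacent. -/
def SimpleGraph.IndepSet {α : Type*} (G : SimpleGraph α) (s : Set α) : Prop :=
  ∀ u ∈ s, ∀ v ∈ s, u ≠ v → ¬ G.Adj u v

/-- The independence number: the largest cardinality of an independent set. -/
noncomputable def SimpleGraph.indepNum' {α : Type*} [Fintype α] (G : SimpleGraph α) : ℕ :=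
  sSup {n | ∃ s : Finset α, G.IndepSet ↑s ∧ s.card = n}

/-- An `i`-packing: a set of vertices pairwise at distance greater than `i`. -/
def SimpleGraph.IsPacking {α : Type*} (G : SimpleGraph α) (i : ℕ) (s : Set α) : Prop :=
  ∀ u ∈ s, ∀ v ∈ s, u ≠ v → i < G.dist u v

/-- The `i`-packing number: the largest cardinality of an `i`-packing. -/
noncomputable def SimpleGraph.packingNum {α : Type*} [Fintype α] (G : SimpleGraph α)
    (i : ℕ) : ℕ :=
  sSup {n | ∃ s : Finset α, G.IsPacking i ↑s ∧ s.card = n}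

/-- A `k`-packing coloring: colors in `{1, …, k}`, and any two distinct vertices sharing
color `i` are at distance greater than `i`. -/
def SimpleGraph.IsPackingColoring {α : Type*} (G : SimpleGraph α) (k : ℕ) (c : α → ℕ) :
    Prop :=
  (∀ v, c v ∈ Finset.Icc 1 k) ∧ ∀ u v, u ≠ v → c u = c v → c u < G.dist u v

/-- The packing chromatic number: the least `k` admitting a `k`-packing coloring. -/
noncomputable def SimpleGraph.packingChromatic {α : Type*} (G : SimpleGraph α) : ℕ :=
  sInf {k | ∃ c : α → ℕ, G.IsPackingColoring k c}

/-- `d(G) = 1` if `G` is complete, and `diam(G) - 1` otherwise. -/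
noncomputable def SimpleGraph.dval {α : Type*} [Fintype α] (G : SimpleGraph α) : ℕ :=
  letI := Classical.dec (G = (⊤ : SimpleGraph α))
  if G = (⊤ : SimpleGraph α) then 1 else G.diam - 1


lemma indep_bdd {γ : Type*} [Fintype γ] (G : SimpleGraph γ) :
    BddAbove {n | ∃ s : Finset γ, G.IndepSet ↑s ∧ s.card = n} :=
  ⟨Fintype.card γ, by rintro n ⟨s, -, rfl⟩; exact s.card_le_univ⟩

lemma le_indepNum {γ : Type*} [Fintype γ] (G : SimpleGraph γ) {s : Finset γ}
    (h : G.IndepSet ↑s) : s.card ≤ G.indepNum' :=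
  le_csSup (indep_bdd G) ⟨s, h, rfl⟩

lemma exists_indepNum {γ : Type*} [Fintype γ] (G : SimpleGraph γ) :
    ∃ s : Finset γ, G.IndepSet ↑s ∧ s.card = G.indepNum' := by
  have h0 : (0 : ℕ) ∈ {n | ∃ s : Finset γ, G.IndepSet ↑s ∧ s.card = n} :=
    ⟨∅, by simp [SimpleGraph.IndepSet], rfl⟩
  exact Nat.sSup_mem ⟨0, h0⟩ (indep_bdd G)

theorem indepNum_lexProd {α β : Type*} [Fintype α] [Fintype β]
    (G : SimpleGraph α) (H : SimpleGraph β) :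
    (G.lexProd H).indepNum' = G.indepNum' * H.indepNum' := by
  classical
  obtain ⟨s, hs, hscard⟩ := exists_indepNum G
  obtain ⟨t, ht, htcard⟩ := exists_indepNum H
  apply le_antisymm
  · -- upper bound
    obtain ⟨u, hu, hucard⟩ := exists_indepNum (G.lexProd H)
    rw [← hucard]
    set A : Finset α := u.image Prod.fst with hA
    have hAind : G.IndepSet ↑A := by
      intro a ha b hb hab hadj
      simp only [hA, Finset.coe_image, Set.mem_image, Finset.mem_coe] at ha hb
      obtain ⟨p, hp, rfl⟩ := ha
      obtain ⟨q, hq, rfl⟩ := hb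
      exact hu p hp q hq (fun h => hab (congrArg Prod.fst h)) (Or.inl hadj)
    have hsum : u.card = ∑ a ∈ A, (u.filter fun p => p.1 = a).card :=
      Finset.card_eq_sum_card_fiberwise (fun p hp => Finset.mem_image_of_mem _ hp)
    have hfiber : ∀ a ∈ A, (u.filter fun p => p.1 = a).card ≤ H.indepNum' := by
      intro a _
      set f := u.filter fun p => p.1 = a with hf
      have hinj : Set.InjOn Prod.snd (↑f : Set (α × β)) := by
        intro p hp q hq hpq
        simp only [hf, Finset.coe_filter, Set.mem_setOf_eq] at hp hq
        exact Prod.ext (hp.2.trans hq.2.symm) hpq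
      have hcard : f.card = (f.image Prod.snd).card :=
        (Finset.card_image_of_injOn hinj).symm
      rw [hcard]
      apply le_indepNum
      intro b hb c hc hbc hadj
      simp only [Finset.coe_image, Set.mem_image, Finset.mem_coe] at hb hc
      obtain ⟨p, hp, rfl⟩ := hb
      obtain ⟨q, hq, rfl⟩ := hc
      have hp' := Finset.mem_filter.mp hp
      have hq' := Finset.mem_filter.mp hq
      exact hu p hp'.1 q hq'.1 (fun h => hbc (congrArg Prod.snd h))
        (Or.inr ⟨hp'.2.trans hq'.2.symm, hadj⟩)
    calc u.card = ∑ a ∈ A, (u.filter fun p => p.1 = a).card := hsum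
      _ ≤ ∑ _a ∈ A, H.indepNum' := Finset.sum_le_sum hfiber
      _ = A.card * H.indepNum' := by rw [Finset.sum_const, smul_eq_mul]
      _ ≤ G.indepNum' * H.indepNum' :=
          Nat.mul_le_mul_right _ (le_indepNum G hAind)
  · -- lower bound
    rw [← hscard, ← htcard, ← Finset.card_product]
    apply le_indepNum
    rintro ⟨a, b⟩ hab ⟨c, d⟩ hcd hne hadj
    simp only [Finset.coe_product, Set.mem_prod, Finset.mem_coe] at hab hcd
    rcases hadj with h | ⟨rfl, h⟩
    · exact hs a hab.1 c hcd.1 (G.ne_of_adj h) h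
    · exact ht b hab.2 d hcd.2 (fun hbd => hne (by rw [hbd])) h
end

section
/- For positive integers n and m with m ≥ 2, χ_ρ(P_n∘K_m) ≤ nm − ⌈n/2⌉ − Σ_{i=2}^{m} ⌈n/(i+1)⌉ − ⌊(⌊n/2⌋ − 1)/(⌊(m+1)/2⌋ + 1)⌋ + m. -/
open SimpleGraph

namespace PackAux
open Finset


variable {n m : ℕ}

lemma walk_dist_le {u v : Fin n × Fin m}
    (p : ((pathGraph n).lexProd (⊤ : SimpleGraph (Fin m))).Walk u v) :
    Nat.dist u.1.val v.1.val ≤ p.length := by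
  induction p with
  | nil => simp [Nat.dist_self]
  | @cons a b c hadj p ih =>
    have h1 : Nat.dist a.1.val b.1.val ≤ 1 := by
      rcases hadj with h | ⟨heq, _⟩
      · rw [pathGraph_adj] at h
        simp only [Nat.dist]; omega
      · rw [heq]; simp [Nat.dist_self]
    calc Nat.dist a.1.val c.1.val
        ≤ Nat.dist a.1.val b.1.val + Nat.dist b.1.val c.1.val :=
          Nat.dist.triangle_inequality _ _ _
      _ ≤ 1 + p.length := by omega
      _ = (SimpleGraph.Walk.cons hadj p).length := by
          rw [SimpleGraph.Walk.length_cons]; omega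

lemma lex_preconnected (hm : 0 < m) :
    ((pathGraph n).lexProd (⊤ : SimpleGraph (Fin m))).Preconnected := by
  intro u v
  have hp : (pathGraph n).Reachable u.1 v.1 := pathGraph_preconnected n u.1 v.1
  let φ : pathGraph n →g (pathGraph n).lexProd (⊤ : SimpleGraph (Fin m)) :=
    ⟨fun i => (i, u.2), fun h => Or.inl h⟩
  have r1 : ((pathGraph n).lexProd (⊤ : SimpleGraph (Fin m))).Reachable
      (u.1, u.2) (v.1, u.2) := hp.map φ
  have r2 : ((pathGraph n).lexProd (⊤ : SimpleGraph (Fin m))).Reachable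
      (v.1, u.2) (v.1, v.2) := by
    by_cases h : u.2 = v.2
    · rw [h]
    · exact SimpleGraph.Adj.reachable (Or.inr ⟨rfl, by simpa using h⟩)
  simpa using r1.trans r2

lemma lt_dist (hm : 0 < m) {u v : Fin n × Fin m} {k : ℕ}
    (hk : k + 1 ≤ Nat.dist u.1.val v.1.val) :
    k < ((pathGraph n).lexProd (⊤ : SimpleGraph (Fin m))).dist u v := by
  obtain ⟨p, hp⟩ := (lex_preconnected hm u v).exists_walk_length_eq_dist
  have := walk_dist_le p
  omega

lemma mod_dist {p q t : ℕ} (hne : p ≠ q) (h : p % t = q % t) : t ≤ Nat.dist p q := by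
  rcases Nat.lt_or_ge p q with hlt | hge
  · have hd : t ∣ q - p := (Nat.modEq_iff_dvd' hlt.le).mp h
    have := Nat.le_of_dvd (by omega) hd
    simp only [Nat.dist]; omega
  · have hlt : q < p := by omega
    have hd : t ∣ p - q := (Nat.modEq_iff_dvd' hlt.le).mp h.symm
    have := Nat.le_of_dvd (by omega) hd
    simp only [Nat.dist]; omega




lemma card_filter_mod (t a : ℕ) (ht : 0 < t) (ha : a < t) :
    ∀ N : ℕ, #{p ∈ Finset.range N | p % t = a} = (N + (t - 1 - a)) / t := by
  intro N
  induction N with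
  | zero =>
    simp only [Finset.range_zero, Finset.filter_empty, Finset.card_empty, Nat.zero_add]
    rw [Nat.div_eq_of_lt (by omega)]
  | succ N ih =>
    rw [Finset.range_add_one, Finset.filter_insert]
    have key : (t ∣ N + (t - 1 - a) + 1) ↔ N % t = a := by
      have hq : N = t * (N / t) + N % t := (Nat.div_add_mod N t).symm
      have hr : N % t < t := Nat.mod_lt _ ht
      set r := N % t with hrdef
      constructor
      · intro hd
        have h2 : t ∣ r + (t - 1 - a) + 1 := by
          have heq : N + (t - 1 - a) + 1 = t * (N / t) + (r + (t - 1 - a) + 1) := by omega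
          rw [heq] at hd
          exact (Nat.dvd_add_right (Dvd.intro _ rfl)).mp hd
        have h3 : t ≤ r + (t - 1 - a) + 1 := Nat.le_of_dvd (by omega) h2
        have h4 : t ∣ r + (t - 1 - a) + 1 - t := Nat.dvd_sub h2 dvd_rfl
        have h6 : r + (t - 1 - a) + 1 - t = 0 := Nat.eq_zero_of_dvd_of_lt h4 (by omega)
        omega
      · intro hra
        have heq : N + (t - 1 - a) + 1 = t * (N / t) + t := by omega
        rw [heq]
        exact Dvd.dvd.add (Dvd.intro _ rfl) dvd_rfl
    have hsucc : (N + 1 + (t - 1 - a)) / t = (N + (t - 1 - a)) / t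
        + if t ∣ N + (t - 1 - a) + 1 then 1 else 0 := by
      have heq : N + 1 + (t - 1 - a) = (N + (t - 1 - a)) + 1 := by omega
      rw [heq, Nat.succ_div]
    by_cases h : N % t = a
    · rw [if_pos h, Finset.card_insert_of_notMem (by simp), ih, hsucc,
        if_pos (key.mpr h)]
    · rw [if_neg h, ih, hsucc, if_neg (fun hd => h (key.mp hd))]
      omega

lemma fiber_card (n m : ℕ) (P : ℕ → Prop) [DecidablePred P] (r : Fin m) :
    #(Finset.univ.filter fun v : Fin n × Fin m => P v.1.val ∧ v.2 = r)
      = #{p ∈ Finset.range n | P p} := by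
  apply Finset.card_bij' (i := fun v _ => v.1.val)
    (j := fun p hp => ((⟨p, Finset.mem_range.mp (Finset.mem_filter.mp hp).1⟩ : Fin n), r))
  case hi =>
    intro v hv
    simp only [Finset.mem_filter, Finset.mem_univ, true_and] at hv
    rw [Finset.mem_filter, Finset.mem_range]
    exact ⟨v.1.isLt, hv.1⟩
  case hj =>
    intro p hp
    simp only [Finset.mem_filter, Finset.mem_range] at hp
    simp only [Finset.mem_filter, Finset.mem_univ, true_and]
    exact ⟨hp.2, trivial⟩
  case left_inv =>
    intro v hv
    simp only [Finset.mem_filter, Finset.mem_univ, true_and] at hv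
    exact Prod.ext (Fin.ext rfl) hv.2.symm
  case right_inv =>
    intro p hp
    rfl

lemma sum_reindex (m : ℕ) [NeZero m] (hm : 2 ≤ m) (g : ℕ → ℕ) :
    ∑ r ∈ (Finset.univ : Finset (Fin m)).erase 0, g (r.val + 1)
      = ∑ i ∈ Finset.Icc 2 m, g i := by
  apply Finset.sum_bij' (i := fun r _ => r.val + 1)
    (j := fun i hi => (⟨i - 1, by
      rw [Finset.mem_Icc] at hi; omega⟩ : Fin m))
  case hi =>
    intro r hr
    rw [Finset.mem_erase] at hr
    have h0 : r.val ≠ 0 := fun h => hr.1 (Fin.ext (by simpa using h))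
    have := r.isLt
    rw [Finset.mem_Icc]; omega
  case hj =>
    intro i hi
    rw [Finset.mem_Icc] at hi
    rw [Finset.mem_erase]
    refine ⟨fun h => ?_, Finset.mem_univ _⟩
    have := congrArg Fin.val h
    simp only [Fin.val_zero] at this
    omega
  case left_neg =>
    intro r hr
    exact Fin.ext (by simp)
  case right_neg =>
    intro i hi
    rw [Finset.mem_Icc] at hi
    show i - 1 + 1 = i
    omega
  case h =>
    intro r hr
    rfl

lemma card_row0 (n d : ℕ) (hd2 : 2 ∣ d) (hd : 4 ≤ d) (hn : 2 ≤ n) :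
    #{p ∈ Finset.range n | p % 2 = 0 ∨ p % d = 1}
      = (n + 1) / 2 + ((n - 2) / d + 1) := by
  rw [Finset.filter_or, Finset.card_union_of_disjoint]
  · rw [card_filter_mod 2 0 (by omega) (by omega) n,
      card_filter_mod d 1 (by omega) (by omega) n]
    have h1 : n + (d - 1 - 1) = (n - 2) + 1 * d := by omega
    have h2 : n + (2 - 1 - 0) = n + 1 := by omega
    rw [h1, h2, Nat.add_mul_div_right _ _ (by omega : 0 < d)]
  · rw [Finset.disjoint_left]
    intro p hp hp'
    rw [Finset.mem_filter] at hp hp'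
    have := Nat.mod_mod_of_dvd p hd2
    rw [hp'.2] at this
    omega

/-- the big even modulus for the extra color class -/
def dd (m : ℕ) : ℕ := 2 * ((m + 1) / 2 + 1)

def sp1 (n m : ℕ) (v : Fin n × Fin m) : Prop := v.2.val = 0 ∧ v.1.val % 2 = 0
def sp2 (n m : ℕ) (v : Fin n × Fin m) : Prop := 1 ≤ v.2.val ∧ v.1.val % (v.2.val + 2) = 0
def sp3 (n m : ℕ) (v : Fin n × Fin m) : Prop := v.2.val = 0 ∧ v.1.val % dd m = 1
def special (n m : ℕ) (v : Fin n × Fin m) : Prop := sp1 n m v ∨ sp2 n m v ∨ sp3 n m v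

instance (n m : ℕ) : DecidablePred (sp1 n m) := fun _ => by unfold sp1; infer_instance
instance (n m : ℕ) : DecidablePred (sp2 n m) := fun _ => by unfold sp2; infer_instance
instance (n m : ℕ) : DecidablePred (sp3 n m) := fun _ => by unfold sp3; infer_instance
instance (n m : ℕ) : DecidablePred (special n m) := fun _ => by unfold special; infer_instance

def Tset (n m : ℕ) : Finset (Fin n × Fin m) :=
  Finset.univ.filter fun v => ¬ special n m v

def enc (m : ℕ) {n : ℕ} (v : Fin n × Fin m) : ℕ := v.1.val * m + v.2.val

def cnt (n m : ℕ) (v : Fin n × Fin m) : ℕ :=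
  #((Tset n m).filter fun w => enc m w < enc m v)

def col (n m : ℕ) (v : Fin n × Fin m) : ℕ :=
  if sp1 n m v then 1
  else if sp2 n m v then v.2.val + 1
  else if sp3 n m v then m + 1
  else m + 2 + cnt n m v

lemma chrom_le (n m : ℕ) (hm : 2 ≤ m) :
    ((pathGraph n).lexProd (⊤ : SimpleGraph (Fin m))).packingChromatic
      ≤ (Tset n m).card + m + 1 := by
  have hm0 : 0 < m := by omega
  have hdge : m + 2 ≤ dd m := by unfold dd; omega
  -- injectivity of enc
  have henc_inj : ∀ u v : Fin n × Fin m, enc m u = enc m v → u = v := by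
    intro u v h
    have h2u := u.2.isLt; have h2v := v.2.isLt
    have hr : u.2.val = v.2.val := by
      have a1 : (u.2.val + u.1.val * m) % m = u.2.val := by
        rw [Nat.add_mul_mod_self_right, Nat.mod_eq_of_lt h2u]
      have a2 : (v.2.val + v.1.val * m) % m = v.2.val := by
        rw [Nat.add_mul_mod_self_right, Nat.mod_eq_of_lt h2v]
      have h' : u.2.val + u.1.val * m = v.2.val + v.1.val * m := by
        unfold enc at h; omega
      rw [← a1, ← a2, h']
    have hp : u.1.val = v.1.val := by
      refine Nat.eq_of_mul_eq_mul_right hm0 ?_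
      unfold enc at h; omega
    exact Prod.ext (Fin.ext hp) (Fin.ext hr)
  have hcnt_mono : ∀ u ∈ Tset n m, ∀ v ∈ Tset n m,
      enc m u < enc m v → cnt n m u < cnt n m v := by
    intro u hu v hv hlt
    have hsub : insert u ((Tset n m).filter fun w => enc m w < enc m u)
        ⊆ (Tset n m).filter fun w => enc m w < enc m v := by
      intro w hw
      rw [Finset.mem_insert] at hw
      rcases hw with rfl | hw
      · exact Finset.mem_filter.mpr ⟨hu, hlt⟩
      · rw [Finset.mem_filter] at hw ⊢
        exact ⟨hw.1, by omega⟩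
    have hcard := Finset.card_le_card hsub
    rw [Finset.card_insert_of_notMem (by simp [Finset.mem_filter])] at hcard
    unfold cnt
    omega
  have hcnt_bound : ∀ v ∈ Tset n m, cnt n m v + 1 ≤ (Tset n m).card := by
    intro v hv
    have hsub : ((Tset n m).filter fun w => enc m w < enc m v) ⊆ (Tset n m).erase v := by
      intro w hw
      rw [Finset.mem_filter] at hw
      rw [Finset.mem_erase]
      exact ⟨fun h => absurd (h ▸ hw.2) (lt_irrefl _), hw.1⟩
    have h1 := Finset.card_le_card hsub
    rw [Finset.card_erase_of_mem hv] at h1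
    have hpos : 0 < (Tset n m).card := Finset.card_pos.mpr ⟨v, hv⟩
    unfold cnt
    omega
  have hclass : ∀ w : Fin n × Fin m,
      (sp1 n m w ∧ col n m w = 1) ∨ (sp2 n m w ∧ col n m w = w.2.val + 1) ∨
      (sp3 n m w ∧ col n m w = m + 1) ∨ (w ∈ Tset n m ∧ col n m w = m + 2 + cnt n m w) := by
    intro w
    by_cases h1 : sp1 n m w
    · exact Or.inl ⟨h1, by simp [col, h1]⟩
    by_cases h2 : sp2 n m w
    · exact Or.inr (Or.inl ⟨h2, by simp [col, h1, h2]⟩)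
    by_cases h3 : sp3 n m w
    · exact Or.inr (Or.inr (Or.inl ⟨h3, by simp [col, h1, h2, h3]⟩))
    · refine Or.inr (Or.inr (Or.inr ⟨?_, by simp [col, h1, h2, h3]⟩))
      rw [Tset, Finset.mem_filter]
      exact ⟨Finset.mem_univ _, fun hsp => by rcases hsp with h | h | h <;> tauto⟩
  apply Nat.sInf_le
  refine ⟨col n m, fun v => ?_, fun u v hne heq => ?_⟩
  · -- membership in Icc 1 K
    rw [Finset.mem_Icc]
    rcases hclass v with ⟨h, hc⟩ | ⟨h, hc⟩ | ⟨h, hc⟩ | ⟨h, hc⟩ <;> rw [hc]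
    · omega
    · have := v.2.isLt; omega
    · omega
    · have := hcnt_bound v h
      omega
  · -- distance condition
    have hne1 : ∀ (a b : Fin n × Fin m), a ≠ b → a.2 = b.2 → a.1.val ≠ b.1.val :=
      fun a b hab h2 h1 => hab (Prod.ext (Fin.ext h1) h2)
    rcases hclass u with ⟨hu, hcu⟩ | ⟨hu, hcu⟩ | ⟨hu, hcu⟩ | ⟨hu, hcu⟩ <;>
      rcases hclass v with ⟨hv, hcv⟩ | ⟨hv, hcv⟩ | ⟨hv, hcv⟩ | ⟨hv, hcv⟩
    · -- sp1 sp1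
      have hr : u.2 = v.2 := Fin.ext (by rw [hu.1, hv.1])
      have hp := hne1 u v hne hr
      have hdist := mod_dist hp (by rw [hu.2, hv.2])
      rw [hcu]; exact lt_dist hm0 (by omega)
    · exact absurd heq (by rw [hcu, hcv]; have := hv.1; omega)
    · exact absurd heq (by rw [hcu, hcv]; omega)
    · exact absurd heq (by rw [hcu, hcv]; omega)
    · exact absurd heq (by rw [hcu, hcv]; have := hu.1; omega)
    · -- sp2 sp2
      have hr2 : u.2.val = v.2.val := by rw [hcu, hcv] at heq; omega
      have hr : u.2 = v.2 := Fin.ext hr2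
      have hp := hne1 u v hne hr
      have hdist := mod_dist hp (t := u.2.val + 2)
        (by rw [hu.2]; rw [hr2]; exact hv.2.symm)
      rw [hcu]; exact lt_dist hm0 (by omega)
    · exact absurd heq (by rw [hcu, hcv]; have := u.2.isLt; omega)
    · exact absurd heq (by rw [hcu, hcv]; have := u.2.isLt; omega)
    · exact absurd heq (by rw [hcu, hcv]; omega)
    · exact absurd heq (by rw [hcu, hcv]; have := v.2.isLt; omega)
    · -- sp3 sp3
      have hr : u.2 = v.2 := Fin.ext (by rw [hu.1, hv.1])
      have hp := hne1 u v hne hr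
      have hdist := mod_dist hp (t := dd m) (by rw [hu.2, hv.2])
      rw [hcu]; exact lt_dist hm0 (by omega)
    · exact absurd heq (by rw [hcu, hcv]; omega)
    · exact absurd heq (by rw [hcu, hcv]; omega)
    · exact absurd heq (by rw [hcu, hcv]; have := v.2.isLt; omega)
    · exact absurd heq (by rw [hcu, hcv]; omega)
    · -- both in Tset
      exfalso
      rw [hcu, hcv] at heq
      have hcnteq : cnt n m u = cnt n m v := by omega
      rcases Nat.lt_trichotomy (enc m u) (enc m v) with h | h | h
      · exact absurd hcnteq (Nat.ne_of_lt (hcnt_mono u hu v hv h))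
      · exact hne (henc_inj u v h)
      · exact absurd hcnteq.symm (Nat.ne_of_lt (hcnt_mono v hv u hu h))


lemma card_special (n m : ℕ) (hn : 2 ≤ n) (hm : 2 ≤ m) :
    #(Finset.univ.filter (special n m))
      = (n + 1) / 2 + (∑ i ∈ Finset.Icc 2 m, (n + i) / (i + 1))
        + ((n / 2 - 1) / ((m + 1) / 2 + 1) + 1) := by
  haveI : NeZero m := ⟨by omega⟩
  have hd4 : 4 ≤ dd m := by unfold dd; omega
  have hd2 : 2 ∣ dd m := ⟨(m + 1) / 2 + 1, rfl⟩
  -- fiberwise decomposition over the second coordinate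
  rw [Finset.card_eq_sum_card_fiberwise
    (f := Prod.snd) (t := (Finset.univ : Finset (Fin m))) (fun x _ => Finset.mem_univ _)]
  -- value of each fiber
  have hfib : ∀ r ∈ (Finset.univ : Finset (Fin m)),
      #(Finset.filter (fun a => a.2 = r) (Finset.univ.filter (special n m)))
        = if r = (0 : Fin m) then (n + 1) / 2 + ((n - 2) / dd m + 1)
          else (n + (r.val + 1)) / (r.val + 2) := by
    intro r _
    rw [Finset.filter_filter]
    by_cases hr0 : r = (0 : Fin m)
    · subst hr0
      rw [if_pos rfl]
      have hcong : (Finset.univ.filter fun v : Fin n × Fin m => special n m v ∧ v.2 = 0)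
          = Finset.univ.filter fun v : Fin n × Fin m =>
              (v.1.val % 2 = 0 ∨ v.1.val % dd m = 1) ∧ v.2 = 0 := by
        refine Finset.filter_congr fun v _ => ?_
        by_cases h2 : v.2 = (0 : Fin m)
        · have h2v : v.2.val = 0 := by rw [h2]; rfl
          unfold special sp1 sp2 sp3
          constructor
          · rintro ⟨h | h | h, -⟩
            · exact ⟨Or.inl h.2, h2⟩
            · omega
            · exact ⟨Or.inr h.2, h2⟩
          · rintro ⟨h | h, -⟩
            · exact ⟨Or.inl ⟨h2v, h⟩, h2⟩
            · exact ⟨Or.inr (Or.inr ⟨h2v, h⟩), h2⟩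
        · constructor
          · rintro ⟨-, hc⟩; exact absurd hc h2
          · rintro ⟨-, hc⟩; exact absurd hc h2
      rw [hcong, fiber_card n m (fun p => p % 2 = 0 ∨ p % dd m = 1) 0,
        card_row0 n (dd m) hd2 hd4 hn]
    · rw [if_neg hr0]
      have hrv : 1 ≤ r.val := by
        rcases Nat.eq_zero_or_pos r.val with h | h
        · exact absurd (Fin.ext (by simpa using h)) hr0
        · exact h
      have hcong : (Finset.univ.filter fun v : Fin n × Fin m => special n m v ∧ v.2 = r)
          = Finset.univ.filter fun v : Fin n × Fin m =>
              v.1.val % (r.val + 2) = 0 ∧ v.2 = r := by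
        refine Finset.filter_congr fun v _ => ?_
        by_cases h2 : v.2 = r
        · have h2v : v.2.val = r.val := by rw [h2]
          unfold special sp1 sp2 sp3
          constructor
          · rintro ⟨h | h | h, -⟩
            · omega
            · refine ⟨?_, h2⟩; rw [← h2v]; exact h.2
            · omega
          · rintro ⟨h, -⟩
            exact ⟨Or.inr (Or.inl ⟨by omega, by rw [h2v]; exact h⟩), h2⟩
        · constructor
          · rintro ⟨-, hc⟩; exact absurd hc h2
          · rintro ⟨-, hc⟩; exact absurd hc h2
      rw [hcong, fiber_card n m (fun p => p % (r.val + 2) = 0) r,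
        card_filter_mod (r.val + 2) 0 (by omega) (by omega) n]
      congr 2
  rw [Finset.sum_congr rfl hfib]
  rw [← Finset.add_sum_erase _ _ (Finset.mem_univ (0 : Fin m))]
  rw [if_pos rfl]
  have herase : ∑ r ∈ (Finset.univ : Finset (Fin m)).erase 0,
      (if r = (0 : Fin m) then (n + 1) / 2 + ((n - 2) / dd m + 1)
        else (n + (r.val + 1)) / (r.val + 2))
      = ∑ i ∈ Finset.Icc 2 m, (n + i) / (i + 1) := by
    rw [Finset.sum_congr rfl (fun r hr => if_neg (Finset.mem_erase.mp hr).1)]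
    exact sum_reindex m hm (fun i => (n + i) / (i + 1))
  rw [herase]
  have harith : (n - 2) / dd m = (n / 2 - 1) / ((m + 1) / 2 + 1) := by
    unfold dd
    rw [← Nat.div_div_eq_div_mul]
    congr 1
    omega
  rw [harith]
  ring

end PackAux

theorem packingChromatic_path_lexProd_complete (n m : ℕ) (hn : 0 < n) (hm : 2 ≤ m) :
    (((pathGraph n).lexProd (⊤ : SimpleGraph (Fin m))).packingChromatic : ℤ) ≤
      (n * m : ℤ) - (((n + 1) / 2 : ℕ) : ℤ)
        - ∑ i ∈ Finset.Icc 2 m, (((n + i) / (i + 1) : ℕ) : ℤ)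
        - (((n / 2 - 1) / ((m + 1) / 2 + 1) : ℕ) : ℤ) + (m : ℤ) := by
  rcases Nat.lt_or_ge n 2 with hn1 | hn2
  · -- the case `n = 1`
    obtain rfl : n = 1 := by omega
    have hchrom : ((pathGraph 1).lexProd (⊤ : SimpleGraph (Fin m))).packingChromatic ≤ m := by
      apply Nat.sInf_le
      refine ⟨fun v => v.2.val + 1, fun v => ?_, fun u v hne heq => ?_⟩
      · rw [Finset.mem_Icc]
        show 1 ≤ v.2.val + 1 ∧ v.2.val + 1 ≤ m
        have := v.2.isLt; omega
      · exfalso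
        apply hne
        have heq' : u.2.val + 1 = v.2.val + 1 := heq
        have h1u := u.1.isLt
        have h1v := v.1.isLt
        have h2 : u.2 = v.2 := Fin.ext (by omega)
        have h1 : u.1 = v.1 := Fin.ext (by omega)
        exact Prod.ext h1 h2
    have hsum : ∑ i ∈ Finset.Icc 2 m, (((1 + i) / (i + 1) : ℕ) : ℤ)
        = (m : ℤ) - 1 := by
      calc ∑ i ∈ Finset.Icc 2 m, (((1 + i) / (i + 1) : ℕ) : ℤ)
          = ∑ _i ∈ Finset.Icc 2 m, (1 : ℤ) := by
            refine Finset.sum_congr rfl fun i hi => ?_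
            have h1 : (1 + i) / (i + 1) = 1 := by
              rw [Nat.add_comm]; exact Nat.div_self (by omega)
            rw [h1]; norm_num
        _ = ((Finset.Icc 2 m).card : ℤ) := by rw [Finset.sum_const]; simp
        _ = (m : ℤ) - 1 := by rw [Nat.card_Icc]; omega
    rw [hsum]
    have h2 : ((1 + 1) / 2 : ℕ) = 1 := rfl
    have h3 : ((1 / 2 - 1) / ((m + 1) / 2 + 1) : ℕ) = 0 := by norm_num
    rw [h2, h3]
    have := hchrom
    push_cast
    omega
  · -- the case `n ≥ 2`
    have hA := PackAux.chrom_le n m hm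
    have hTS : (Finset.univ.filter (PackAux.special n m)).card + (PackAux.Tset n m).card
        = n * m := by
      have h0 := Finset.card_filter_add_card_filter_not
        (s := (Finset.univ : Finset (Fin n × Fin m))) (p := PackAux.special n m)
      rw [Finset.card_univ, Fintype.card_prod, Fintype.card_fin, Fintype.card_fin] at h0
      exact h0
    have hS := PackAux.card_special n m hn2 hm
    set A := (n + 1) / 2 with hAdef
    set B := ∑ i ∈ Finset.Icc 2 m, (n + i) / (i + 1) with hBdef
    set C := (n / 2 - 1) / ((m + 1) / 2 + 1) with hCdef
    have hnat : (PackAux.Tset n m).card + A + B + C + 1 = n * m := by omega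
    have hsum : (B : ℤ) = ∑ i ∈ Finset.Icc 2 m, (((n + i) / (i + 1) : ℕ) : ℤ) := by
      rw [hBdef, Nat.cast_sum]
    calc (((pathGraph n).lexProd (⊤ : SimpleGraph (Fin m))).packingChromatic : ℤ)
        ≤ (((PackAux.Tset n m).card + m + 1 : ℕ) : ℤ) := by exact_mod_cast hA
      _ = (n * m : ℤ) - ((A : ℕ) : ℤ)
            - ∑ i ∈ Finset.Icc 2 m, (((n + i) / (i + 1) : ℕ) : ℤ)
            - ((C : ℕ) : ℤ) + (m : ℤ) := by
          rw [← hsum]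
          have h1 : (((PackAux.Tset n m).card + m + 1 : ℕ) : ℤ)
              = ((PackAux.Tset n m).card : ℤ) + (m : ℤ) + 1 := by push_cast; ring
          have h2 : (((PackAux.Tset n m).card + A + B + C + 1 : ℕ) : ℤ)
              = ((n * m : ℕ) : ℤ) := by exact_mod_cast hnat
          push_cast at h2
          rw [h1]
          linarith
end

section
/- For any graph G, χ_ρ(G) ≥ |V(G)| − α(G) − Σ_{i=2}^{diam(G)−1} ρ_i(G) + d(G), where d(G) = 1 if G is complete and d(G) = diam(G) − 1 otherwise. -/
open SimpleGraph

/-- The independence number: the largest cardinality of an independent set. -/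
noncomputable def SimpleGraph.indepNumOld {α : Type*} [Fintype α] (G : SimpleGraph α) : ℕ :=
  sSup {n | ∃ s : Finset α, G.IndepSet ↑s ∧ s.card = n}

theorem packingChromatic_lower {α : Type*} [Fintype α]
    (G : SimpleGraph α) (hG : G.Connected) :
    (Fintype.card α : ℤ) - (G.indepNumOld : ℤ)
        - ∑ i ∈ Finset.Icc 2 (G.diam - 1), (G.packingNum i : ℤ) + (G.dval : ℤ)
      ≤ (G.packingChromatic : ℤ) := by
  classical
  haveI hne : Nonempty α := hG.nonempty
  have v₀ : α := Classical.arbitrary α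
  have hed : G.ediam ≠ ⊤ := by
    obtain ⟨u, v, huv⟩ := G.exists_edist_eq_ediam_of_finite
    rw [← huv]
    exact SimpleGraph.edist_ne_top_iff_reachable.mpr (hG.preconnected u v)
  have hbdd : ∀ P : Set α → Prop, BddAbove {n | ∃ s : Finset α, P ↑s ∧ s.card = n} :=
    fun P => ⟨Fintype.card α, by rintro n ⟨s, -, rfl⟩; exact s.card_le_univ⟩
  have hSne : {k | ∃ c : α → ℕ, G.IsPackingColoring k c}.Nonempty := by
    refine ⟨Fintype.card α, fun v => ((Fintype.equivFin α) v : ℕ) + 1, fun v => ?_,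
      fun u v huv hcv => ?_⟩
    · simp only [Finset.mem_Icc]
      exact ⟨Nat.le_add_left _ _, Nat.succ_le_of_lt ((Fintype.equivFin α) v).is_lt⟩
    · exact absurd ((Fintype.equivFin α).injective
        (Fin.val_injective (Nat.succ_injective hcv))) huv
  obtain ⟨c, hc1, hc2⟩ : ∃ c : α → ℕ, G.IsPackingColoring G.packingChromatic c :=
    Nat.sInf_mem hSne
  set k := G.packingChromatic with hkdef
  have hcmem : ∀ v, 1 ≤ c v ∧ c v ≤ k := fun v => Finset.mem_Icc.mp (hc1 v)
  have hk1 : 1 ≤ k := le_trans (hcmem v₀).1 (hcmem v₀).2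
  set m : ℕ → ℕ := fun j => (Finset.univ.filter (fun v => c v = j)).card with hm
  have hm1 : m 1 ≤ G.indepNumOld := by
    apply le_csSup (hbdd _)
    refine ⟨Finset.univ.filter (fun v => c v = 1), ?_, rfl⟩
    intro u hu v hv huv hadj
    simp only [Finset.coe_filter, Set.mem_setOf_eq, Finset.mem_univ, true_and] at hu hv
    have h1 := hc2 u v huv (hu.trans hv.symm)
    rw [hu] at h1
    have h2 := SimpleGraph.dist_eq_one_iff_adj.mpr hadj
    omega
  have hmp : ∀ j, m j ≤ G.packingNum j := by
    intro j
    apply le_csSup (hbdd _)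
    refine ⟨Finset.univ.filter (fun v => c v = j), ?_, rfl⟩
    intro u hu v hv huv
    simp only [Finset.coe_filter, Set.mem_setOf_eq, Finset.mem_univ, true_and] at hu hv
    have h1 := hc2 u v huv (hu.trans hv.symm)
    rwa [hu] at h1
  have hρ1 : ∀ j, 1 ≤ G.packingNum j := by
    intro j
    apply le_csSup (hbdd _)
    refine ⟨{v₀}, ?_, Finset.card_singleton v₀⟩
    intro u hu v hv huv
    simp only [Finset.coe_singleton, Set.mem_singleton_iff] at hu hv
    exact absurd (hu.trans hv.symm) huv
  have hms : ∀ j, G.diam ≤ j → m j ≤ 1 := by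
    intro j hj
    apply Finset.card_le_one.mpr
    intro u hu v hv
    simp only [Finset.mem_filter, Finset.mem_univ, true_and] at hu hv
    by_contra huv
    have h1 := hc2 u v huv (hu.trans hv.symm)
    rw [hu] at h1
    have h2 : G.dist u v ≤ G.diam := G.dist_le_diam hed
    omega
  have hm0 : ∀ j, k < j → m j = 0 := by
    intro j hj
    simp only [hm, Finset.card_eq_zero]
    rw [Finset.filter_eq_empty_iff]
    intro v _ hv
    have := (hcmem v).2
    omega
  set M := max k (G.diam - 1) with hMdef
  have hkM : k ≤ M := le_max_left _ _
  have hcard : Fintype.card α = ∑ j ∈ Finset.Ioc 0 M, m j := by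
    rw [← Finset.card_univ]
    apply Finset.card_eq_sum_card_fiberwise
    intro v _
    rw [Finset.mem_coe, Finset.mem_Ioc]
    exact ⟨(hcmem v).1, le_trans (hcmem v).2 hkM⟩
  by_cases hT : G = (⊤ : SimpleGraph α)
  · -- complete case
    have hdv : G.dval = 1 := by rw [SimpleGraph.dval]; simp [hT]
    have hD : G.diam ≤ 1 := by
      rcases subsingleton_or_nontrivial α with h | h
      · have h0 : G.diam = 0 := SimpleGraph.diam_eq_zero.mpr (Or.inr h)
        omega
      · rw [hT, SimpleGraph.diam_top]
    have hsum0 : Finset.Icc 2 (G.diam - 1) = ∅ := Finset.Icc_eq_empty (by omega)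
    have hMk : M = k := by
      rw [hMdef]
      have h0 : G.diam - 1 = 0 := by omega
      rw [h0]
      exact Nat.max_eq_left (Nat.zero_le k)
    have hcardk : Fintype.card α ≤ k := by
      calc Fintype.card α = ∑ j ∈ Finset.Ioc 0 M, m j := hcard
        _ ≤ ∑ _j ∈ Finset.Ioc 0 M, 1 :=
            Finset.sum_le_sum (fun j hj => hms j (le_trans hD (Finset.mem_Ioc.mp hj).1))
        _ = M := by simp
        _ = k := hMk
    have hind : 1 ≤ G.indepNumOld := by
      apply le_csSup (hbdd _)
      refine ⟨{v₀}, ?_, Finset.card_singleton v₀⟩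
      intro u hu v hv huv
      simp only [Finset.coe_singleton, Set.mem_singleton_iff] at hu hv
      exact absurd (hu.trans hv.symm) huv
    rw [hdv, hsum0, Finset.sum_empty]
    push_cast
    omega
  · -- non-complete case
    have hdv : G.dval = G.diam - 1 := by rw [SimpleGraph.dval]; simp [hT]
    have hnt : Nontrivial α := by
      rcases subsingleton_or_nontrivial α with h | h
      · exfalso
        apply hT
        ext u v
        rw [SimpleGraph.top_adj]
        exact iff_of_false (fun h' => h'.ne (Subsingleton.elim u v))
          (fun h' => h' (Subsingleton.elim u v))
      · exact h
    have hD2 : 2 ≤ G.diam := by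
      have h0 : G.diam ≠ 0 := by
        rw [Ne, SimpleGraph.diam_eq_zero]
        push_neg
        exact ⟨hed, hnt⟩
      have h1 : G.diam ≠ 1 := fun h => hT (SimpleGraph.diam_eq_one.mp h)
      omega
    set e := G.diam - 1 with hedef
    have he1 : 1 ≤ e := by omega
    have heM : e ≤ M := le_max_right _ _
    set b : ℕ → ℤ := fun j =>
      if j = 1 then (G.indepNumOld : ℤ) else if j ≤ e then (G.packingNum j : ℤ) else 1 with hb
    have hpt : ∀ j ∈ Finset.Ioc 0 M, (m j : ℤ) + (if k < j then 1 else 0) ≤ b j := by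
      intro j hj
      rw [Finset.mem_Ioc] at hj
      simp only [hb]
      by_cases h1 : j = 1
      · subst h1
        rw [if_pos rfl, if_neg (by omega)]
        have := hm1
        omega
      · rw [if_neg h1]
        by_cases h2 : j ≤ e
        · rw [if_pos h2]
          by_cases h3 : k < j
          · rw [if_pos h3]
            have h4 := hm0 j h3
            have h5 := hρ1 j
            omega
          · rw [if_neg h3]
            have h4 := hmp j
            omega
        · rw [if_neg h2]
          have hj2 := hj.2
          rw [hMdef] at hj2
          have hjk : j ≤ k := by
            rcases le_max_iff.mp hj2 with h | h
            · exact h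
            · omega
          rw [if_neg (by omega : ¬ k < j)]
          have h4 := hms j (by omega : G.diam ≤ j)
          omega
    have hsum : ∑ j ∈ Finset.Ioc 0 M, ((m j : ℤ) + (if k < j then 1 else 0))
        ≤ ∑ j ∈ Finset.Ioc 0 M, b j := Finset.sum_le_sum hpt
    have hL1 : ∑ j ∈ Finset.Ioc 0 M, (m j : ℤ) = (Fintype.card α : ℤ) := by
      rw [hcard, Nat.cast_sum]
    have hL2 : ∑ j ∈ Finset.Ioc 0 M, (if k < j then (1 : ℤ) else 0) = (M : ℤ) - k := by
      rw [← Finset.sum_Ioc_consecutive _ (Nat.zero_le k) hkM]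
      have e1 : ∑ j ∈ Finset.Ioc 0 k, (if k < j then (1 : ℤ) else 0) = 0 :=
        Finset.sum_eq_zero (fun j hj => if_neg (not_lt.mpr (Finset.mem_Ioc.mp hj).2))
      have e2 : ∑ j ∈ Finset.Ioc k M, (if k < j then (1 : ℤ) else 0) = (M : ℤ) - k := by
        rw [Finset.sum_congr rfl (fun j hj => if_pos (Finset.mem_Ioc.mp hj).1),
          Finset.sum_const, Nat.card_Ioc, nsmul_eq_mul, mul_one]
        omega
      rw [e1, e2, zero_add]
    have hR : ∑ j ∈ Finset.Ioc 0 M, b j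
        = (G.indepNumOld : ℤ) + (∑ i ∈ Finset.Icc 2 e, (G.packingNum i : ℤ))
          + ((M : ℤ) - e) := by
      rw [← Finset.sum_Ioc_consecutive b (Nat.zero_le e) heM,
        ← Finset.sum_Ioc_consecutive b (Nat.zero_le 1) he1]
      have e1 : ∑ j ∈ Finset.Ioc 0 1, b j = (G.indepNumOld : ℤ) := by
        have h01 : Finset.Ioc 0 1 = {1} := by ext x; simp only [Finset.mem_Ioc, Finset.mem_singleton]; omega
        rw [h01, Finset.sum_singleton]
        simp [hb]
      have e2 : ∑ j ∈ Finset.Ioc 1 e, b j = ∑ i ∈ Finset.Icc 2 e, (G.packingNum i : ℤ) := by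
        rw [show Finset.Icc 2 e = Finset.Ioc 1 e by ext x; simp only [Finset.mem_Icc, Finset.mem_Ioc]; omega]
        apply Finset.sum_congr rfl
        intro j hj
        rw [Finset.mem_Ioc] at hj
        simp only [hb]
        rw [if_neg (by omega), if_pos hj.2]
      have e3 : ∑ j ∈ Finset.Ioc e M, b j = (M : ℤ) - e := by
        have hbj : ∀ j ∈ Finset.Ioc e M, b j = 1 := by
          intro j hj
          rw [Finset.mem_Ioc] at hj
          simp only [hb]
          rw [if_neg (by omega), if_neg (by omega)]
        rw [Finset.sum_congr rfl hbj, Finset.sum_const, Nat.card_Ioc, nsmul_eq_mul, mul_one]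
        omega
      rw [e1, e2, e3]
    rw [hdv]
    rw [Finset.sum_add_distrib, hL1, hL2, hR] at hsum
    linarith
end

section
/- Let G be a connected graph with diam(G) ≥ 2 and H any graph. In any packing coloring of G∘H, at most one vertex receives each color i with i ≥ diam(G), and at most ρ_i(G) vertices receive color i for each 2 ≤ i ≤ diam(G) − 1. -/
open SimpleGraph

lemma lexProd_lift_walk {α β : Type*} (G : SimpleGraph α) (H : SimpleGraph β)
    {a b : α} (p : G.Walk a b) (y : β) :
    ∃ q : (G.lexProd H).Walk (a, y) (b, y), q.length = p.length := by
  induction p with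
  | nil => exact ⟨.nil, rfl⟩
  | cons h p ih =>
    obtain ⟨q, hq⟩ := ih
    exact ⟨.cons (Or.inl h) q, congrArg (· + 1) hq⟩

lemma lexProd_dist_le {α β : Type*} (G : SimpleGraph α) (H : SimpleGraph β)
    (hG : G.Connected) {u v : α × β} (h : u.1 ≠ v.1) :
    (G.lexProd H).dist u v ≤ G.dist u.1 v.1 := by
  obtain ⟨u1, u2⟩ := u
  obtain ⟨v1, v2⟩ := v
  simp only at h ⊢
  obtain ⟨p, hp⟩ := hG.exists_walk_length_eq_dist u1 v1
  cases p with
  | nil => exact absurd rfl h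
  | @cons _ w _ ha p' =>
    obtain ⟨q, hq⟩ := lexProd_lift_walk G H p' v2
    have hle : (G.lexProd H).dist (u1, u2) (v1, v2) ≤
        (SimpleGraph.Walk.cons (Or.inl ha :
          (G.lexProd H).Adj (u1, u2) (w, v2)) q).length :=
      SimpleGraph.dist_le _
    simp only [SimpleGraph.Walk.length_cons] at hle hp
    have hle' : (G.lexProd H).dist (u1, u2) (v1, v2) ≤ q.length + 1 := hle
    omega

lemma lexProd_dist_le_two {α β : Type*} (G : SimpleGraph α) (H : SimpleGraph β)
    (hG : G.Connected) [Nontrivial α] {u v : α × β} (h1 : u.1 = v.1) :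
    (G.lexProd H).dist u v ≤ 2 := by
  obtain ⟨u1, u2⟩ := u
  obtain ⟨v1, v2⟩ := v
  simp only at h1
  subst h1
  obtain ⟨b, hb⟩ := exists_ne u1
  obtain ⟨p⟩ := hG.preconnected u1 b
  cases p with
  | nil => exact absurd rfl hb
  | @cons _ w _ ha _ =>
    have hadj : G.Adj u1 w := ha
    have hle : (G.lexProd H).dist (u1, u2) (u1, v2) ≤
        (SimpleGraph.Walk.cons (Or.inl hadj :
          (G.lexProd H).Adj (u1, u2) (w, u2))
          (SimpleGraph.Walk.cons (Or.inl hadj.symm :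
            (G.lexProd H).Adj (w, u2) (u1, v2)) .nil)).length :=
      SimpleGraph.dist_le _
    exact hle

theorem packingColoring_color_classes {α β : Type*} [Fintype α] [Fintype β]
    (G : SimpleGraph α) (H : SimpleGraph β) (hG : G.Connected) (hd : 2 ≤ G.diam)
    (c : α × β → ℕ)
    (hc : ∀ u v, u ≠ v → c u = c v → c u < (G.lexProd H).dist u v) :
    (∀ i, G.diam ≤ i → ({v | c v = i} : Set (α × β)).Subsingleton) ∧
    (∀ i, 2 ≤ i → i ≤ G.diam - 1 →
      ({v | c v = i} : Set (α × β)).ncard ≤ G.packingNum i) := by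
  classical
  have hnt : Nontrivial α := G.nontrivial_of_diam_ne_zero (by omega)
  have hetop : G.ediam ≠ ⊤ := G.ediam_ne_top_of_diam_ne_zero (by omega)
  constructor
  · intro i hi u hu v hv
    have hu' : c u = i := hu
    have hv' : c v = i := hv
    by_contra hne
    have h := hc u v hne (hu'.trans hv'.symm)
    rw [hu'] at h
    rcases eq_or_ne u.1 v.1 with h1 | h1
    · have := lexProd_dist_le_two G H hG h1
      omega
    · have h2 := lexProd_dist_le G H hG h1
      have h3 := G.dist_le_diam hetop (u := u.1) (v := v.1)
      omega
  · intro i hi2 _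
    have hSfin : ({v | c v = i} : Set (α × β)).Finite := Set.toFinite _
    have hinj : Set.InjOn Prod.fst {v | c v = i} := by
      intro u hu v hv h1
      have hu' : c u = i := hu
      have hv' : c v = i := hv
      by_contra hne
      have h := hc u v hne (hu'.trans hv'.symm)
      rw [hu'] at h
      have := lexProd_dist_le_two G H hG h1
      omega
    set s : Finset α := hSfin.toFinset.image Prod.fst with hs
    have hcard : ({v | c v = i} : Set (α × β)).ncard = s.card := by
      rw [hs, Finset.card_image_of_injOn (by rw [Set.Finite.coe_toFinset]; exact hinj),
        ← Set.ncard_eq_toFinset_card _ hSfin]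
    have hpack : G.IsPacking i ↑s := by
      intro x hx y hy hxy
      simp only [hs, Finset.coe_image, Set.Finite.coe_toFinset] at hx hy
      obtain ⟨u, hu, rfl⟩ := hx
      obtain ⟨v, hv, rfl⟩ := hy
      have hu' : c u = i := hu
      have hv' : c v = i := hv
      have hne : u ≠ v := fun h => hxy (by rw [h])
      have h := hc u v hne (hu'.trans hv'.symm)
      rw [hu'] at h
      have h2 := lexProd_dist_le G H hG hxy
      omega
    rw [hcard]
    apply le_csSup
    · exact ⟨Fintype.card α, by rintro n ⟨t, -, rfl⟩; exact t.card_le_univ⟩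
    · exact ⟨s, hpack, rfl⟩
end
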